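/- Let Σ ∈ ℝⁿˣⁿ be a symmetric positive definite matrix, μ ∈ ℝⁿ, and let Δ be a nonempty closed convex subset of the simplex S = {θ ∈ ℝⁿ : θ ≥ 0, 1ᵀθ = 1}. For φ > -1 let θ̂(φ) ∈ Δ denote the unique minimizer of θ ↦ -μᵀθ + ((φ+1)/2)·θᵀΣθ over Δ. Then θ̂ is locally Lipschitz continuous on (-1, ∞): for every compact interval [φ₁, φ₂] ⊂ (-1, ∞) there exists L ≥ 0 such that ‖θ̂(φ) - θ̂(φ')‖ ≤ L·|φ - φ'| for all φ, φ' ∈ [φ₁, φ₂]. -/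

import Mathlib

open scoped Matrix

/-- Positive definite matrices give a quadratic lower bound (w.r.t. the sup norm on `Fin n → ℝ`). -/
lemma aux_posdef_lb {n : ℕ} {Q : Matrix (Fin n) (Fin n) ℝ} (hpd : Q.PosDef) :
    ∃ c : ℝ, 0 < c ∧ ∀ d : Fin n → ℝ, c * ‖d‖ ^ 2 ≤ d ⬝ᵥ Q.mulVec d := by
  rcases Nat.eq_zero_or_pos n with h0 | hn
  · refine ⟨1, one_pos, fun d => ?_⟩
    subst h0
    have hd : d = 0 := Subsingleton.elim _ _
    have hnorm : ‖d‖ = 0 := by rw [hd, norm_zero]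
    rw [hnorm, hd]
    simp [dotProduct]
  · have hcomp : IsCompact (Metric.sphere (0 : Fin n → ℝ) 1) := isCompact_sphere _ _
    have hne : (Metric.sphere (0 : Fin n → ℝ) 1).Nonempty := by
      have : Nontrivial (Fin n → ℝ) := by
        haveI : Nonempty (Fin n) := ⟨⟨0, hn⟩⟩
        infer_instance
      exact NormedSpace.sphere_nonempty.2 zero_le_one
    have hcont : Continuous fun d : Fin n → ℝ => d ⬝ᵥ Q.mulVec d :=
      continuous_id.dotProduct (continuous_const.matrix_mulVec continuous_id)
    obtain ⟨u, hu, humin⟩ := hcomp.exists_isMinOn hne hcont.continuousOn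
    have hu1 : ‖u‖ = 1 := by simpa using hu
    have hu0 : u ≠ 0 := by intro h; simp [h] at hu1
    refine ⟨u ⬝ᵥ Q.mulVec u, hpd.dotProduct_mulVec_pos hu0, fun d => ?_⟩
    rcases eq_or_ne d 0 with rfl | hd0
    · simp
    · have hnd : (0:ℝ) < ‖d‖ := norm_pos_iff.2 hd0
      set v : Fin n → ℝ := ‖d‖⁻¹ • d with hv
      have hv1 : v ∈ Metric.sphere (0 : Fin n → ℝ) 1 := by
        simp [hv, norm_smul, abs_of_pos (inv_pos.2 hnd), inv_mul_cancel₀ hnd.ne']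
      have hmin := humin hv1
      have hvq : v ⬝ᵥ Q.mulVec v = ‖d‖⁻¹ ^ 2 * (d ⬝ᵥ Q.mulVec d) := by
        simp [hv, smul_dotProduct, Matrix.mulVec_smul, dotProduct_smul,
          smul_eq_mul]
        ring
      have hle : u ⬝ᵥ Q.mulVec u ≤ ‖d‖⁻¹ ^ 2 * (d ⬝ᵥ Q.mulVec d) := by
        simpa [hvq] using hmin
      have h2 : (0:ℝ) < ‖d‖ ^ 2 := by positivity
      calc (u ⬝ᵥ Q.mulVec u) * ‖d‖ ^ 2 ≤ (‖d‖⁻¹ ^ 2 * (d ⬝ᵥ Q.mulVec d)) * ‖d‖ ^ 2 :=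
            mul_le_mul_of_nonneg_right hle h2.le
        _ = d ⬝ᵥ Q.mulVec d := by field_simp

/-- Entrywise upper bound for the bilinear form. -/
lemma aux_bilin_ub {n : ℕ} (Q : Matrix (Fin n) (Fin n) ℝ) (x d : Fin n → ℝ)
    (hx : ∀ i, |x i| ≤ 2) :
    |x ⬝ᵥ Q.mulVec d| ≤ 2 * (∑ i, ∑ j, |Q i j|) * ‖d‖ := by
  have hstep : ∀ i, |x i * (Q.mulVec d) i| ≤ 2 * ((∑ j, |Q i j|) * ‖d‖) := by
    intro i
    rw [abs_mul]
    have h1 : |(Q.mulVec d) i| ≤ (∑ j, |Q i j|) * ‖d‖ := by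
      have : (Q.mulVec d) i = ∑ j, Q i j * d j := rfl
      rw [this, Finset.sum_mul]
      refine (Finset.abs_sum_le_sum_abs _ _).trans (Finset.sum_le_sum fun j _ => ?_)
      rw [abs_mul]
      exact mul_le_mul_of_nonneg_left ((Real.norm_eq_abs _ ▸ norm_le_pi_norm d j)) (abs_nonneg _)
    have h2 : (0:ℝ) ≤ (∑ j, |Q i j|) * ‖d‖ := by positivity
    calc |x i| * |(Q.mulVec d) i| ≤ 2 * |(Q.mulVec d) i| :=
          mul_le_mul_of_nonneg_right (hx i) (abs_nonneg _)
      _ ≤ 2 * ((∑ j, |Q i j|) * ‖d‖) := by linarith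
  calc |x ⬝ᵥ Q.mulVec d| = |∑ i, x i * (Q.mulVec d) i| := rfl
    _ ≤ ∑ i, |x i * (Q.mulVec d) i| := Finset.abs_sum_le_sum_abs _ _
    _ ≤ ∑ i, 2 * ((∑ j, |Q i j|) * ‖d‖) := Finset.sum_le_sum fun i _ => hstep i
    _ = 2 * (∑ i, ∑ j, |Q i j|) * ‖d‖ := by
        rw [← Finset.mul_sum, ← Finset.sum_mul, mul_assoc]

/-- with `Q`, `μ`, `Δ` as before and `θ̂(φ)` the unique minimizer of
`θ ↦ -μᵀθ + ((φ+1)/2)θᵀQθ` over `Δ` for `φ > -1`, the map `θ̂` is locally Lipschitz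
on `(-1, ∞)`: on every compact interval `[φ₁, φ₂] ⊂ (-1, ∞)` there is `L ≥ 0` with
`‖θ̂(φ) - θ̂(φ')‖ ≤ L·|φ - φ'|`. -/
theorem stmt_17 {n : ℕ} (Q : Matrix (Fin n) (Fin n) ℝ) (hsymm : Q.IsSymm) (hpd : Q.PosDef)
    (μ : Fin n → ℝ) (Δ : Set (Fin n → ℝ)) (hne : Δ.Nonempty)
    (hcl : IsClosed Δ) (hcv : Convex ℝ Δ)
    (hsub : Δ ⊆ {θ : Fin n → ℝ | (∀ i, 0 ≤ θ i) ∧ ∑ i, θ i = 1})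
    (θhat : ℝ → (Fin n → ℝ))
    (hθhat : ∀ φ : ℝ, -1 < φ → θhat φ ∈ Δ ∧ ∀ θ ∈ Δ,
      -(μ ⬝ᵥ θhat φ) + ((φ + 1) / 2) * (θhat φ ⬝ᵥ Q.mulVec (θhat φ)) ≤
        -(μ ⬝ᵥ θ) + ((φ + 1) / 2) * (θ ⬝ᵥ Q.mulVec θ)) :
    ∀ φ₁ φ₂ : ℝ, -1 < φ₁ → φ₁ ≤ φ₂ →
      ∃ L : ℝ, 0 ≤ L ∧ ∀ φ ∈ Set.Icc φ₁ φ₂, ∀ φ' ∈ Set.Icc φ₁ φ₂,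
        ‖θhat φ - θhat φ'‖ ≤ L * |φ - φ'| := by
  -- symmetry of the bilinear form
  have hsym : ∀ a b : Fin n → ℝ, a ⬝ᵥ Q.mulVec b = b ⬝ᵥ Q.mulVec a := by
    intro a b
    rw [Matrix.dotProduct_mulVec, dotProduct_comm]
    conv_lhs => rw [← hsymm.eq, Matrix.vecMul_transpose]
  obtain ⟨lam, hlam, hlb⟩ := aux_posdef_lb hpd
  intro φ₁ φ₂ hφ₁ h12
  set C : ℝ := ∑ i, ∑ j, |Q i j| with hCdef
  have hC0 : (0:ℝ) ≤ C := Finset.sum_nonneg fun i _ => Finset.sum_nonneg fun j _ => abs_nonneg _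
  have hpos : (0:ℝ) < lam * (φ₁ + 1) := by
    have : (0:ℝ) < φ₁ + 1 := by linarith
    positivity
  refine ⟨4 * C / (lam * (φ₁ + 1)), by positivity, ?_⟩
  intro φ hφ φ' hφ'
  have hφg : (-1:ℝ) < φ := lt_of_lt_of_le hφ₁ hφ.1
  have hφ'g : (-1:ℝ) < φ' := lt_of_lt_of_le hφ₁ hφ'.1
  obtain ⟨hxΔ, hxmin⟩ := hθhat φ hφg
  obtain ⟨hyΔ, hymin⟩ := hθhat φ' hφ'g
  set x : Fin n → ℝ := θhat φ with hxdef
  set y : Fin n → ℝ := θhat φ' with hydef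
  have hm : (1/2:ℝ) • x + (1/2:ℝ) • y ∈ Δ :=
    hcv hxΔ hyΔ (by norm_num) (by norm_num) (by norm_num)
  set qxx : ℝ := x ⬝ᵥ Q.mulVec x with hqxx
  set qxy : ℝ := x ⬝ᵥ Q.mulVec y with hqxy
  set qyy : ℝ := y ⬝ᵥ Q.mulVec y with hqyy
  -- bilinear expansions
  have e1 : ((1/2:ℝ) • x + (1/2:ℝ) • y) ⬝ᵥ Q.mulVec ((1/2:ℝ) • x + (1/2:ℝ) • y)
      = (qxx + 2 * qxy + qyy) / 4 := by
    simp only [hqxx, hqxy, hqyy, Matrix.mulVec_add, Matrix.mulVec_smul, add_dotProduct,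
      smul_dotProduct, dotProduct_add, dotProduct_smul, smul_eq_mul,
      hsym y x]
    ring
  have e2 : (x - y) ⬝ᵥ Q.mulVec (x - y) = qxx - 2 * qxy + qyy := by
    simp only [hqxx, hqxy, hqyy, Matrix.mulVec_sub, sub_dotProduct,
      dotProduct_sub, hsym y x]
    ring
  have e3 : (x + y) ⬝ᵥ Q.mulVec (x - y) = qxx - qyy := by
    simp only [hqxx, hqxy, hqyy, Matrix.mulVec_sub, add_dotProduct,
      dotProduct_sub, hsym y x]
    ring
  have eμ : μ ⬝ᵥ ((1/2:ℝ) • x + (1/2:ℝ) • y) = (μ ⬝ᵥ x + μ ⬝ᵥ y) / 2 := by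
    simp only [dotProduct_add, dotProduct_smul, smul_eq_mul]
    ring
  -- the two minimality inequalities at the midpoint
  have h1 := hxmin _ hm
  have h2 := hymin _ hm
  rw [e1, eμ] at h1 h2
  set qdd : ℝ := qxx - 2 * qxy + qyy with hqdd
  have key : (φ + φ' + 2) * qdd ≤ 2 * (φ' - φ) * (qxx - qyy) := by
    rw [hqdd]; nlinarith [h1, h2]
  -- lower bound
  have hqdd_lb : lam * ‖x - y‖ ^ 2 ≤ qdd := by
    have := hlb (x - y)
    rwa [e2] at this
  have hqdd0 : (0:ℝ) ≤ qdd := le_trans (by positivity) hqdd_lb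
  -- upper bound
  have hbox : ∀ z ∈ Δ, ∀ i, 0 ≤ z i ∧ z i ≤ 1 := by
    intro z hz i
    obtain ⟨hzpos, hzsum⟩ := hsub hz
    refine ⟨hzpos i, ?_⟩
    calc z i ≤ ∑ j, z j :=
          Finset.single_le_sum (fun j _ => hzpos j) (Finset.mem_univ i)
      _ = 1 := hzsum
  have hq_ub : |qxx - qyy| ≤ 2 * C * ‖x - y‖ := by
    rw [← e3]
    refine aux_bilin_ub Q (x + y) (x - y) fun i => ?_
    obtain ⟨hx0, hx1⟩ := hbox x hxΔ i
    obtain ⟨hy0, hy1⟩ := hbox y hyΔ i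
    rw [abs_le]
    constructor <;> simp only [Pi.add_apply] <;> linarith
  -- combine
  have hsum : φ₁ + 1 ≤ φ + φ' + 2 := by
    have := hφ.1; have := hφ'.1; linarith
  have chain : lam * (φ₁ + 1) * (‖x - y‖ * ‖x - y‖) ≤ (4 * C * |φ - φ'|) * ‖x - y‖ := by
    have s1 : (φ₁ + 1) * qdd ≤ (φ + φ' + 2) * qdd := mul_le_mul_of_nonneg_right hsum hqdd0
    have s2 : 2 * (φ' - φ) * (qxx - qyy) ≤ 2 * |φ - φ'| * |qxx - qyy| := by
      have habs : (φ' - φ) * (qxx - qyy) ≤ |φ' - φ| * |qxx - qyy| := by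
        calc (φ' - φ) * (qxx - qyy) ≤ |(φ' - φ) * (qxx - qyy)| := le_abs_self _
          _ = |φ' - φ| * |qxx - qyy| := abs_mul _ _
      rw [abs_sub_comm φ φ']
      linarith
    have s3 : 2 * |φ - φ'| * |qxx - qyy| ≤ 2 * |φ - φ'| * (2 * C * ‖x - y‖) :=
      mul_le_mul_of_nonneg_left hq_ub (by positivity)
    have s0 : lam * (φ₁ + 1) * (‖x - y‖ * ‖x - y‖) ≤ (φ₁ + 1) * qdd := by
      have h1' : (φ₁ + 1) * (lam * ‖x - y‖ ^ 2) ≤ (φ₁ + 1) * qdd :=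
        mul_le_mul_of_nonneg_left hqdd_lb (by linarith)
      calc lam * (φ₁ + 1) * (‖x - y‖ * ‖x - y‖) = (φ₁ + 1) * (lam * ‖x - y‖ ^ 2) := by ring
        _ ≤ (φ₁ + 1) * qdd := h1'
    calc lam * (φ₁ + 1) * (‖x - y‖ * ‖x - y‖) ≤ (φ₁ + 1) * qdd := s0
      _ ≤ (φ + φ' + 2) * qdd := s1
      _ ≤ 2 * (φ' - φ) * (qxx - qyy) := key
      _ ≤ 2 * |φ - φ'| * |qxx - qyy| := s2
      _ ≤ 2 * |φ - φ'| * (2 * C * ‖x - y‖) := s3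
      _ = (4 * C * |φ - φ'|) * ‖x - y‖ := by ring
  rcases eq_or_ne (‖x - y‖) 0 with hd0 | hd0
  · rw [hd0]; positivity
  · have hdpos : (0:ℝ) < ‖x - y‖ := lt_of_le_of_ne (norm_nonneg _) (Ne.symm hd0)
    have hfin : lam * (φ₁ + 1) * ‖x - y‖ ≤ 4 * C * |φ - φ'| := by
      have h' : (lam * (φ₁ + 1) * ‖x - y‖) * ‖x - y‖ ≤ (4 * C * |φ - φ'|) * ‖x - y‖ := by
        calc (lam * (φ₁ + 1) * ‖x - y‖) * ‖x - y‖
            = lam * (φ₁ + 1) * (‖x - y‖ * ‖x - y‖) := by ring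
          _ ≤ (4 * C * |φ - φ'|) * ‖x - y‖ := chain
      exact le_of_mul_le_mul_right h' hdpos
    rw [div_mul_eq_mul_div, le_div_iff₀ hpos]
    calc ‖x - y‖ * (lam * (φ₁ + 1)) = lam * (φ₁ + 1) * ‖x - y‖ := by ring
      _ ≤ 4 * C * |φ - φ'| := hfin
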